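/- Let (N_n)_{n≥1} be i.i.d. ℕ-valued random variables with common probability generating function ν(z) = 𝔼[z^{N₁}] and P(N₁ = 0) > 0, and let Q₀ be an ℕ-valued random variable independent of (N_n)_{n≥1}. Define recursively Q_{n+1} = max(Q_n − 1, 0) + N_{n+1}. Let κ_n(z) = 𝔼[z^{Q_n}], κ₀ = κ_0, and for r ∈ (0,1) and z ∈ (0,1) define K(r,z) = Σ_{n=0}^∞ (1−r)ⁿ r κ_n(z). Let z₀(r) be the unique root in (0,1) of z = (1−r)ν(z). Then for all r ∈ (0,1) and all z ∈ (0,1) with z ≠ z₀(r), K(r,z) = r z κ₀(z)/(z − (1−r)ν(z)) − ((1−r)(1−z)ν(z)/(z − (1−r)ν(z))) · (r κ₀(z₀(r))/(1 − z₀(r))). -/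

import Mathlib

open MeasureTheory ProbabilityTheory

private def mgPhi : ℕ → (ℕ → ℕ) → ℕ
  | 0, x => x 0
  | n+1, x => (mgPhi n x - 1) + x (n+1)

private lemma mgPhi_measurable (n : ℕ) : Measurable (mgPhi n) := by
  induction n with
  | zero => exact measurable_pi_apply 0
  | succ n ih => exact (ih.sub measurable_const).add (measurable_pi_apply _)

private lemma mgPhi_congr {x y : ℕ → ℕ} :
    ∀ n, (∀ i ≤ n, x i = y i) → mgPhi n x = mgPhi n y
  | 0, h => h 0 le_rfl
  | n+1, h => by
    rw [mgPhi, mgPhi, mgPhi_congr n (fun i hi => h i (hi.trans n.le_succ)), h (n+1) le_rfl]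

theorem stmt14 {Ω : Type*} [MeasureSpace Ω] [IsProbabilityMeasure (ℙ : Measure Ω)]
    (Q0 : Ω → ℕ) (N : ℕ → Ω → ℕ)
    (hQ0 : Measurable Q0) (hN : ∀ n, Measurable (N n))
    (hIndep : iIndepFun
      (fun n => if n = 0 then Q0 else N n) ℙ)
    (hIdent : ∀ m n, 1 ≤ m → 1 ≤ n → IdentDistrib (N m) (N n) ℙ ℙ)
    (h0 : 0 < ℙ {ω | N 1 ω = 0})
    (Q : ℕ → Ω → ℕ) (hQzero : Q 0 = Q0)
    (hQrec : ∀ n ω, Q (n + 1) ω = max (Q n ω - 1) 0 + N (n + 1) ω)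
    (ν : ℝ → ℝ) (hν : ν = fun z => ∫ ω, z ^ N 1 ω)
    (κ : ℕ → ℝ → ℝ) (hκ : κ = fun n z => ∫ ω, z ^ Q n ω)
    (K : ℝ → ℝ → ℝ) (hK : K = fun r z => ∑' n : ℕ, (1 - r) ^ n * r * κ n z) :
    ∀ r ∈ Set.Ioo (0 : ℝ) 1, ∀ z0 ∈ Set.Ioo (0 : ℝ) 1, z0 = (1 - r) * ν z0 →
      ∀ z ∈ Set.Ioo (0 : ℝ) 1, z ≠ z0 →
        K r z = r * z * κ 0 z / (z - (1 - r) * ν z) -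
          ((1 - r) * (1 - z) * ν z / (z - (1 - r) * ν z)) *
            (r * κ 0 z0 / (1 - z0)) := by
  intro r hr z0 hz0 hz0eq z hz hzne
  obtain ⟨hr0, hr1⟩ := hr
  set f : ℕ → Ω → ℕ := fun i => if i = 0 then Q0 else N i with hf
  have hfmeas : ∀ i, Measurable (f i) := by
    intro i
    rw [hf]
    by_cases h : i = 0
    · simpa [h] using hQ0
    · simpa [h] using hN i
  have hQmeas : ∀ n, Measurable (Q n) := by
    intro n; induction n with
    | zero => rw [hQzero]; exact hQ0
    | succ n ih =>
      have h : Q (n+1) = fun ω => (Q n ω - 1) + N (n+1) ω := by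
        funext ω; simp [hQrec]
      rw [h]; exact (ih.sub measurable_const).add (hN _)
  -- integrability of y ^ (counting rv)
  have hInt : ∀ (c : ℝ), 0 ≤ c → c ≤ 1 → ∀ (g : Ω → ℕ), Measurable g →
      Integrable (fun ω => c ^ g ω) (ℙ : Measure Ω) := by
    intro c hc0 hc1 g hg
    refine (integrable_const (1:ℝ)).mono'
      ((measurable_from_top (f := fun k : ℕ => c ^ k)).comp hg).aestronglyMeasurable
      (ae_of_all _ fun ω => ?_)
    rw [Real.norm_eq_abs, abs_of_nonneg (pow_nonneg hc0 _)]
    exact pow_le_one₀ hc0 hc1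
  -- independence of Q n and N (n+1)
  have hQPhi : ∀ m ω, Q m ω = mgPhi m (fun i => f i ω) := by
    intro m; induction m with
    | zero => intro ω; simp [hQzero, mgPhi, hf]
    | succ m ih =>
      intro ω
      simp only [hQrec, mgPhi, ← ih ω, hf]
      simp
      exact congrArg (· - 1) (ih ω)
  have hQN : ∀ n, IndepFun (Q n) (N (n+1)) (ℙ : Measure Ω) := by
    intro n
    have hdisj : Disjoint (Finset.range (n+1)) ({n+1} : Finset ℕ) := by
      simp only [Finset.disjoint_left, Finset.mem_range, Finset.mem_singleton]
      intro a ha; omega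
    have h := hIndep.indepFun_finset (Finset.range (n+1)) {n+1} hdisj hfmeas
    set G : ((Finset.range (n+1) : Finset ℕ) → ℕ) → ℕ :=
      fun x => mgPhi n (fun i => if hi : i ∈ Finset.range (n+1) then x ⟨i, hi⟩ else 0) with hG
    have hGmeas : Measurable G := by
      apply (mgPhi_measurable n).comp
      apply measurable_pi_lambda
      intro i
      by_cases hi : i ∈ Finset.range (n+1)
      · simp only [hi, dif_pos]; exact measurable_pi_apply _
      · simp only [hi, dif_neg, not_false_iff]; exact measurable_const
    have h1 : Q n = G ∘ (fun ω (i : (Finset.range (n+1) : Finset ℕ)) => f i ω) := by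
      funext ω
      simp only [Function.comp_apply, hG]
      rw [hQPhi n ω]
      exact mgPhi_congr n fun i hi => by
        rw [dif_pos (Finset.mem_range.2 (Nat.lt_succ_of_le hi))]
    have h2 : N (n+1) = (fun x : (({n+1} : Finset ℕ) → ℕ) =>
        x ⟨n+1, Finset.mem_singleton_self _⟩) ∘
        (fun ω (i : (({n+1} : Finset ℕ) : Type)) => f i ω) := by
      funext ω; simp [hf]
    rw [h1, h2]
    exact h.comp hGmeas (measurable_pi_apply _)
  -- abbreviations
  set p : ℕ → ℝ := fun n => (ℙ {ω | Q n ω = 0}).toReal with hp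
  have hpmem : ∀ n, 0 ≤ p n ∧ p n ≤ 1 := by
    intro n
    refine ⟨ENNReal.toReal_nonneg, ?_⟩
    have := ENNReal.toReal_mono (ENNReal.one_ne_top) (prob_le_one (μ := (ℙ : Measure Ω))
      (s := {ω | Q n ω = 0}))
    simpa using this
  -- one-step recursion for the pgf of Q
  have hstep : ∀ y : ℝ, 0 < y → y < 1 → ∀ n,
      y * (∫ ω, y ^ Q (n+1) ω) = (∫ ω, y ^ N 1 ω) * ((∫ ω, y ^ Q n ω) + (y - 1) * p n) := by
    intro y hy0 hy1 n
    have hy0' : (0:ℝ) ≤ y := hy0.le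
    have hyne : y ≠ 0 := hy0.ne'
    have indep2 : IndepFun (fun ω => y ^ (Q n ω - 1)) (fun ω => y ^ N (n+1) ω)
        (ℙ : Measure Ω) := by
      have := (hQN n).comp (φ := fun k : ℕ => y ^ (k - 1)) (ψ := fun k : ℕ => y ^ k)
        measurable_from_top measurable_from_top
      exact this
    have e1 : (fun ω => y ^ Q (n+1) ω)
        = (fun ω => y ^ (Q n ω - 1)) * (fun ω => y ^ N (n+1) ω) := by
      funext ω; simp [hQrec, pow_add]
    have int1 : Integrable (fun ω => y ^ (Q n ω - 1)) ℙ :=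
      hInt y hy0' hy1.le _ ((hQmeas n).sub measurable_const)
    have int2 : Integrable (fun ω => y ^ N (n+1) ω) ℙ := hInt y hy0' hy1.le _ (hN _)
    have eint : ∫ ω, y ^ Q (n+1) ω = (∫ ω, y ^ (Q n ω - 1)) * (∫ ω, y ^ N (n+1) ω) := by
      rw [show (∫ ω, y ^ Q (n+1) ω) = ∫ ω, ((fun ω => y ^ (Q n ω - 1)) *
        (fun ω => y ^ N (n+1) ω)) ω by rw [← e1]]
      exact IndepFun.integral_mul_eq_mul_integral indep2 int1.aestronglyMeasurable int2.aestronglyMeasurable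
    have eN : ∫ ω, y ^ N (n+1) ω = ∫ ω, y ^ N 1 ω :=
      ((hIdent (n+1) 1 (Nat.le_add_left 1 n) le_rfl).comp
        (measurable_from_top (f := fun k : ℕ => y ^ k))).integral_eq
    have emeas0 : MeasurableSet {ω | Q n ω = 0} := by
      have : {ω | Q n ω = 0} = Q n ⁻¹' {0} := by ext ω; simp
      rw [this]; exact (hQmeas n) (measurableSet_singleton 0)
    have epoint : (fun ω => y ^ (Q n ω - 1)) =
        fun ω => y ^ Q n ω / y + Set.indicator {ω | Q n ω = 0} (fun _ => 1 - 1/y) ω := by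
      funext ω
      by_cases h : Q n ω = 0
      · have hmem : ω ∈ {ω | Q n ω = 0} := h
        rw [Set.indicator_of_mem hmem]
        simp only [h, Nat.zero_sub, pow_zero]
        field_simp
        ring
      · have hmem : ω ∉ {ω | Q n ω = 0} := h
        rw [Set.indicator_of_notMem hmem]
        have hq : Q n ω - 1 + 1 = Q n ω := Nat.succ_pred_eq_of_pos (Nat.pos_of_ne_zero h)
        rw [add_zero, eq_div_iff hyne, ← pow_succ, hq]
    have intInd : Integrable (Set.indicator {ω | Q n ω = 0} (fun _ => (1:ℝ) - 1/y)) ℙ :=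
      (integrable_const _).indicator emeas0
    have eQ1 : ∫ ω, y ^ (Q n ω - 1) = (∫ ω, y ^ Q n ω) / y + (1 - 1/y) * p n := by
      rw [epoint, integral_add ((hInt y hy0' hy1.le _ (hQmeas n)).div_const y) intInd,
        integral_div, integral_indicator_const _ emeas0, smul_eq_mul, hp]
      simp only [measureReal_def]
      ring
    rw [eint, eN, eQ1]
    field_simp
  -- bounds for the pgf values
  have hκmem : ∀ (y : ℝ), 0 ≤ y → y ≤ 1 → ∀ n,
      0 ≤ (∫ ω, y ^ Q n ω) ∧ (∫ ω, y ^ Q n ω) ≤ 1 := by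
    intro y hy0 hy1 n
    constructor
    · exact integral_nonneg fun ω => pow_nonneg hy0 _
    · calc (∫ ω, y ^ Q n ω) ≤ ∫ _ω, (1:ℝ) :=
          integral_mono (hInt y hy0 hy1 _ (hQmeas n)) (integrable_const 1)
            (fun ω => pow_le_one₀ hy0 hy1)
        _ = 1 := by simp
  -- summability
  have hgeom : Summable (fun n : ℕ => (1-r)^n * r) :=
    (summable_geometric_of_lt_one (by linarith) (by linarith)).mul_right r
  have hsummand : ∀ (c : ℕ → ℝ), (∀ n, 0 ≤ c n) → (∀ n, c n ≤ 1) →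
      Summable (fun n : ℕ => (1-r)^n * r * c n) := by
    intro c hc0 hc1
    refine Summable.of_nonneg_of_le (fun n => ?_) (fun n => ?_) hgeom
    · exact mul_nonneg (mul_nonneg (pow_nonneg (by linarith) _) hr0.le) (hc0 n)
    · exact mul_le_of_le_one_right (mul_nonneg (pow_nonneg (by linarith) _) hr0.le) (hc1 n)
  set P : ℝ := ∑' n : ℕ, (1-r)^n * r * p n with hP
  have hpsum : Summable (fun n : ℕ => (1-r)^n * r * p n) :=
    hsummand p (fun n => (hpmem n).1) (fun n => (hpmem n).2)
  -- key functional identity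
  have key : ∀ y : ℝ, 0 < y → y < 1 →
      y * ((∑' n : ℕ, (1-r)^n * r * ∫ ω, y ^ Q n ω) - r * ∫ ω, y ^ Q 0 ω)
        = (1-r) * (∫ ω, y ^ N 1 ω) * (∑' n : ℕ, (1-r)^n * r * ∫ ω, y ^ Q n ω)
          + (1-r) * (y-1) * (∫ ω, y ^ N 1 ω) * P := by
    intro y hy0 hy1
    have hκsum : Summable (fun n : ℕ => (1-r)^n * r * ∫ ω, y ^ Q n ω) :=
      hsummand _ (fun n => (hκmem y hy0.le hy1.le n).1) (fun n => (hκmem y hy0.le hy1.le n).2)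
    have hshift : (∑' n : ℕ, (1-r)^n * r * ∫ ω, y ^ Q n ω)
        = r * (∫ ω, y ^ Q 0 ω) + ∑' n : ℕ, (1-r)^(n+1) * r * ∫ ω, y ^ Q (n+1) ω := by
      rw [Summable.tsum_eq_zero_add hκsum]; simp
    have e2 : (fun n : ℕ => y * ((1-r)^(n+1) * r * ∫ ω, y ^ Q (n+1) ω)) =
        fun n : ℕ => (1-r) * (∫ ω, y ^ N 1 ω) * ((1-r)^n * r * ∫ ω, y ^ Q n ω)
          + (1-r) * (y-1) * (∫ ω, y ^ N 1 ω) * ((1-r)^n * r * p n) := by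
      funext n
      have h := hstep y hy0 hy1 n
      calc y * ((1-r)^(n+1) * r * ∫ ω, y ^ Q (n+1) ω)
          = (1-r)^(n+1) * r * (y * ∫ ω, y ^ Q (n+1) ω) := by ring
        _ = (1-r)^(n+1) * r * ((∫ ω, y ^ N 1 ω) * ((∫ ω, y ^ Q n ω) + (y - 1) * p n)) := by
            rw [h]
        _ = (1-r) * (∫ ω, y ^ N 1 ω) * ((1-r)^n * r * ∫ ω, y ^ Q n ω)
            + (1-r) * (y-1) * (∫ ω, y ^ N 1 ω) * ((1-r)^n * r * p n) := by ring
    calc y * ((∑' n : ℕ, (1-r)^n * r * ∫ ω, y ^ Q n ω) - r * ∫ ω, y ^ Q 0 ω)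
        = y * ∑' n : ℕ, (1-r)^(n+1) * r * ∫ ω, y ^ Q (n+1) ω := by rw [hshift]; ring
      _ = ∑' n : ℕ, y * ((1-r)^(n+1) * r * ∫ ω, y ^ Q (n+1) ω) := by rw [tsum_mul_left]
      _ = ∑' n : ℕ, ((1-r) * (∫ ω, y ^ N 1 ω) * ((1-r)^n * r * ∫ ω, y ^ Q n ω)
            + (1-r) * (y-1) * (∫ ω, y ^ N 1 ω) * ((1-r)^n * r * p n)) := by rw [e2]
      _ = (1-r) * (∫ ω, y ^ N 1 ω) * (∑' n : ℕ, (1-r)^n * r * ∫ ω, y ^ Q n ω)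
            + (1-r) * (y-1) * (∫ ω, y ^ N 1 ω) * P := by
          rw [Summable.tsum_add (hκsum.mul_left _) (hpsum.mul_left _), tsum_mul_left, tsum_mul_left]
  -- value of P from the root z0
  subst hν hκ hK
  simp only at hz0eq ⊢
  have hz0pos := hz0.1
  have hz0lt := hz0.2
  have h1z0 : (1:ℝ) - z0 ≠ 0 := by intro h; linarith [hz0.2, (by linarith : z0 = 1)]
  have keyz0 := key z0 hz0pos hz0lt
  have hP0 : z0 * ((1 - z0) * P - r * ∫ ω, z0 ^ Q 0 ω) = 0 := by
    linear_combination keyz0 - ((∑' n : ℕ, (1-r)^n * r * ∫ ω, z0 ^ Q n ω)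
      + (z0-1) * P) * hz0eq
  have hP' : (1 - z0) * P = r * ∫ ω, z0 ^ Q 0 ω := by
    rcases mul_eq_zero.1 hP0 with h | h
    · exact absurd h hz0pos.ne'
    · linarith [sub_eq_zero.1 h]
  -- convexity of ν and uniqueness of the root
  have hν1 : (∫ (ω : Ω), (1:ℝ) ^ N 1 ω) = 1 := by simp
  have hconv : ConvexOn ℝ (Set.Icc (0:ℝ) 1) (fun y => ∫ ω, y ^ N 1 ω) := by
    refine ⟨convex_Icc 0 1, ?_⟩
    intro x hx y hy a b ha hb hab
    simp only [smul_eq_mul]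
    have hxy0 : (0:ℝ) ≤ a * x + b * y :=
      add_nonneg (mul_nonneg ha hx.1) (mul_nonneg hb hy.1)
    have hxy1 : a * x + b * y ≤ 1 := by nlinarith [hx.2, hy.2]
    have hmono : (fun ω => (a * x + b * y) ^ N 1 ω)
        ≤ fun ω => a * x ^ N 1 ω + b * y ^ N 1 ω := by
      intro ω
      have h := (convexOn_pow (N 1 ω)).2 (Set.mem_Ici.2 hx.1) (Set.mem_Ici.2 hy.1) ha hb hab
      simpa using h
    calc (∫ ω, (a * x + b * y) ^ N 1 ω)
        ≤ ∫ ω, (a * x ^ N 1 ω + b * y ^ N 1 ω) :=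
          integral_mono (hInt _ hxy0 hxy1 _ (hN 1))
            (((hInt x hx.1 hx.2 _ (hN 1)).const_mul a).add
              ((hInt y hy.1 hy.2 _ (hN 1)).const_mul b)) hmono
      _ = a * (∫ ω, x ^ N 1 ω) + b * ∫ ω, y ^ N 1 ω := by
          rw [integral_add ((hInt x hx.1 hx.2 _ (hN 1)).const_mul a)
            ((hInt y hy.1 hy.2 _ (hN 1)).const_mul b),
            integral_const_mul, integral_const_mul]
  have huniq : ∀ v w : ℝ, v ∈ Set.Ioo (0:ℝ) 1 → w ∈ Set.Ioo (0:ℝ) 1 → v < w →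
      v = (1-r) * ∫ ω, v ^ N 1 ω → w = (1-r) * ∫ ω, w ^ N 1 ω → False := by
    intro v w hv hw hvw hfv hfw
    have h1v : 0 < 1 - v := by linarith [hv.2]
    set t : ℝ := (1 - w)/(1 - v) with ht
    have ht0 : 0 < t := div_pos (by linarith [hw.2]) h1v
    have ht1 : t < 1 := (div_lt_one h1v).2 (by linarith)
    have hne' : (1:ℝ) - v ≠ 0 := h1v.ne'
    have hw' : t * v + (1 - t) * 1 = w := by
      rw [ht]
      field_simp
      ring
    have hcv := hconv.2 (Set.mem_Icc.2 ⟨hv.1.le, hv.2.le⟩)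
      (Set.mem_Icc.2 ⟨zero_le_one, le_rfl⟩) ht0.le (by linarith : (0:ℝ) ≤ 1 - t)
      (by ring : t + (1 - t) = 1)
    have harg : t • v + (1 - t) • (1:ℝ) = w := by
      simp only [smul_eq_mul]; linarith [hw']
    rw [harg] at hcv
    simp only [smul_eq_mul] at hcv
    rw [hν1] at hcv
    -- hcv : (∫ ω, w ^ N 1 ω) ≤ t * (∫ ω, v ^ N 1 ω) + (1 - t) * 1
    have hmul : (1-r) * (∫ ω, w ^ N 1 ω) ≤ t * ((1-r) * ∫ ω, v ^ N 1 ω) + (1-t) * (1-r) := by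
      nlinarith [hcv]
    rw [← hfv, ← hfw] at hmul
    -- w ≤ t * v + (1-t)(1-r), but w = t*v + (1-t)
    nlinarith [hw']
  have hne : z - (1-r) * (∫ ω, z ^ N 1 ω) ≠ 0 := by
    intro h
    have hzeq : z = (1-r) * ∫ ω, z ^ N 1 ω := by linarith [sub_eq_zero.1 h]
    rcases lt_or_gt_of_ne hzne with hlt | hgt
    · exact huniq z z0 hz hz0 hlt hzeq hz0eq
    · exact huniq z0 z hz0 hz hgt hz0eq hzeq
  -- final algebra
  have keyz := key z hz.1 hz.2
  rw [show r * z * (∫ ω, z ^ Q 0 ω) / (z - (1 - r) * ∫ ω, z ^ N 1 ω) -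
      (1 - r) * (1 - z) * (∫ ω, z ^ N 1 ω) / (z - (1 - r) * ∫ ω, z ^ N 1 ω) *
        (r * (∫ ω, z0 ^ Q 0 ω) / (1 - z0))
      = (r * z * (∫ ω, z ^ Q 0 ω) * (1 - z0) -
          (1 - r) * (1 - z) * (∫ ω, z ^ N 1 ω) * (r * ∫ ω, z0 ^ Q 0 ω)) /
        ((z - (1 - r) * ∫ ω, z ^ N 1 ω) * (1 - z0)) by field_simp]
  rw [eq_div_iff (mul_ne_zero hne h1z0)]
  linear_combination (1 - z0) * keyz + (1-r) * (z-1) * (∫ ω, z ^ N 1 ω) * hP'
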